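/- Let H ≥ 2 and n ≥ 2 be integers, and for each i = 1,…,n and j = 1,…,H let ℓ_{i,j} be a nonnegative integer such that L_{i,H} = Σ_{j=1}^{H} ℓ_{i,j} > 0 for every i. Let ε, δ, c be real numbers with 0 < ε < 1/3, 0 < δ < min over i of { ε/(H−1), (1−3ε)/(2H·L_{i,H}) }, and (H−1)δ + 3 < c. Let X = [0, 1−ε] ∪ [2, 3−ε]. Then the interval [1+ε, 2−2ε] contains nonempty Lebesgue-measurable sets Y_1,…,Y_n such that the sets A_i = [0, δ] ∪ (c + (X ∪ Y_i)) satisfy μ(hA_i) − μ(hA_{i+1}) = δ·Σ_{r=h}^{H} (r−h+1)·(ℓ_{i+1,r} − ℓ_{i,r}) for all i = 1,…,n−1 and all h = 1,…,H. -/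

import Mathlib

open MeasureTheory Pointwise

/-- The `h`-fold sumset of a subset `A` of `ℝ`:
`hA = {a₁ + ⋯ + a_h : aᵢ ∈ A}`. -/
def sumset (h : ℕ) (A : Set ℝ) : Set ℝ :=
  {x | ∃ f : Fin h → ℝ, (∀ i, f i ∈ A) ∧ ∑ i, f i = x}

section Aux

open Set

lemma sumset_zero (A : Set ℝ) : sumset 0 A = {0} := by
  ext x
  constructor
  · rintro ⟨f, -, rfl⟩; simp
  · rintro rfl; exact ⟨fun i => 0, fun i => i.elim0, by simp⟩

lemma sumset_one (A : Set ℝ) : sumset 1 A = A := by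
  ext x
  constructor
  · rintro ⟨f, hf, rfl⟩; simpa using hf 0
  · intro hx; exact ⟨fun _ => x, fun _ => hx, by simp⟩

lemma sumset_mono {A B : Set ℝ} (h : A ⊆ B) (m : ℕ) : sumset m A ⊆ sumset m B := by
  rintro x ⟨f, hf, rfl⟩; exact ⟨f, fun i => h (hf i), rfl⟩

lemma sumset_add (a b : ℕ) (A : Set ℝ) :
    sumset (a + b) A = sumset a A + sumset b A := by
  ext x
  rw [Set.mem_add]
  constructor
  · rintro ⟨F, hF, rfl⟩
    exact ⟨∑ i : Fin a, F (Fin.castAdd b i), ⟨_, fun i => hF _, rfl⟩,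
      ∑ i : Fin b, F (Fin.natAdd a i), ⟨_, fun i => hF _, rfl⟩,
      (Fin.sum_univ_add F).symm⟩
  · rintro ⟨y, ⟨f, hf, rfl⟩, z, ⟨g, hg, rfl⟩, rfl⟩
    refine ⟨Fin.append f g, ?_, ?_⟩
    · intro i
      refine Fin.addCases (fun j => ?_) (fun j => ?_) i
      · rw [Fin.append_left]; exact hf j
      · rw [Fin.append_right]; exact hg j
    · rw [Fin.sum_univ_add]
      simp [Fin.append_left, Fin.append_right]

lemma sumset_succ (m : ℕ) (A : Set ℝ) : sumset (m + 1) A = sumset m A + A := by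
  rw [sumset_add m 1 A, sumset_one]

lemma sum_mem_sumset {ι : Type*} [DecidableEq ι] (s : Finset ι) (f : ι → ℝ) {A : Set ℝ}
    (hf : ∀ i ∈ s, f i ∈ A) : (∑ i ∈ s, f i) ∈ sumset s.card A := by
  induction s using Finset.cons_induction with
  | empty => simp [sumset_zero]
  | cons a s ha ih =>
    rw [Finset.sum_cons, Finset.card_cons, sumset_succ, add_comm (f a)]
    exact Set.add_mem_add (ih fun i hi => hf i (Finset.mem_cons_of_mem hi))
      (hf a (Finset.mem_cons_self a s))

lemma sumset_union (h : ℕ) (U V : Set ℝ) :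
    sumset h (U ∪ V) =
      ⋃ m ∈ Finset.range (h + 1), (sumset (h - m) U + sumset m V) := by
  classical
  apply subset_antisymm
  · rintro x ⟨f, hf, rfl⟩
    set T : Finset (Fin h) := Finset.univ.filter (fun i => f i ∈ V) with hT
    set S : Finset (Fin h) := Finset.univ.filter (fun i => ¬ f i ∈ V) with hS
    have hcards : T.card + S.card = h := by
      rw [hT, hS, Finset.card_filter_add_card_filter_not]
      simp
    have hSc : S.card = h - T.card := by omega
    have hTle : T.card ≤ h := by omega
    have hmem : T.card ∈ Finset.range (h + 1) := Finset.mem_range.2 (by omega)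
    refine Set.mem_biUnion hmem ?_
    rw [Set.mem_add]
    refine ⟨∑ i ∈ S, f i, ?_, ∑ i ∈ T, f i, ?_, ?_⟩
    · have := sum_mem_sumset S f (A := U) (fun i hi => ?_)
      · rwa [hSc] at this
      · rcases hf i with h1 | h2
        · exact h1
        · exact absurd h2 (Finset.mem_filter.1 hi).2
    · exact sum_mem_sumset T f (fun i hi => (Finset.mem_filter.1 hi).2)
    · rw [add_comm]
      exact Finset.sum_filter_add_sum_filter_not Finset.univ _ f
  · intro x hx
    simp only [Set.mem_iUnion] at hx
    obtain ⟨m, hm, hx⟩ := hx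
    have hmh : m ≤ h := by
      simpa using Nat.lt_succ_iff.1 (Finset.mem_range.1 hm)
    have : sumset (h - m) U + sumset m V ⊆ sumset (h - m + m) (U ∪ V) := by
      rw [sumset_add]
      exact Set.add_subset_add (sumset_mono Set.subset_union_left _)
        (sumset_mono Set.subset_union_right _)
    rw [Nat.sub_add_cancel hmh] at this
    exact this hx

lemma Icc_add_Icc' {a b c d : ℝ} (hab : a ≤ b) (hcd : c ≤ d) :
    Icc a b + Icc c d = Icc (a + c) (b + d) := by
  apply subset_antisymm
  · exact Set.Icc_add_Icc_subset a b c d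
  · intro x hx
    rw [Set.mem_add]
    refine ⟨min b (max a (x - d)), ⟨le_min hab (le_max_left _ _), min_le_left _ _⟩,
      x - min b (max a (x - d)), ⟨?_, ?_⟩, by ring⟩
    · have h1 : max a (x - d) ≤ x - c := max_le (by linarith [hx.1]) (by linarith)
      have : min b (max a (x - d)) ≤ x - c := le_trans (min_le_right _ _) h1
      linarith
    · have h1 : x - d ≤ min b (max a (x - d)) :=
        le_min (by linarith [hx.2]) (le_max_right _ _)
      linarith

lemma sumset_Icc (m : ℕ) {p q : ℝ} (hpq : p ≤ q) :
    sumset m (Icc p q) = Icc ((m : ℝ) * p) ((m : ℝ) * q) := by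
  induction m with
  | zero => simp [sumset_zero]
  | succ m ih =>
    have hm : (m : ℝ) * p ≤ (m : ℝ) * q :=
      mul_le_mul_of_nonneg_left hpq (Nat.cast_nonneg m)
    rw [sumset_succ, ih, Icc_add_Icc' hm hpq]
    push_cast
    ring_nf

lemma sumset_image_add (m : ℕ) (c : ℝ) (B : Set ℝ) :
    sumset m ((c + ·) '' B) = (fun x => (m : ℝ) * c + x) '' sumset m B := by
  ext x
  constructor
  · rintro ⟨f, hf, rfl⟩
    choose g hg hgc using fun i => hf i
    refine ⟨∑ i, g i, ⟨g, hg, rfl⟩, ?_⟩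
    have : ∀ i, f i = c + g i := fun i => (hgc i).symm
    calc (m : ℝ) * c + ∑ i, g i = ∑ i : Fin m, (c + g i) := by
          rw [Finset.sum_add_distrib, Finset.sum_const, Finset.card_univ]
          simp [nsmul_eq_mul, mul_comm]
        _ = ∑ i, f i := by exact Finset.sum_congr rfl fun i _ => (this i).symm
  · rintro ⟨y, ⟨g, hg, rfl⟩, rfl⟩
    refine ⟨fun i => c + g i, fun i => Set.mem_image_of_mem _ (hg i), ?_⟩
    rw [Finset.sum_add_distrib, Finset.sum_const, Finset.card_univ]
    simp [nsmul_eq_mul, mul_comm]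

/-- The key full-interval lemma: for `m ≥ 2`, the `m`-fold sumset of
`X ∪ Y` is the full interval `[0, m(3-ε)]`. -/
lemma sumset_XY {ε : ℝ} (hε0 : 0 < ε) (hε : ε < 1 / 3) (Yj : Set ℝ)
    (hYsub : Yj ⊆ Icc (1 + ε) (2 - 2 * ε)) (hYne : Yj.Nonempty) :
    ∀ m : ℕ, 2 ≤ m →
      sumset m ((Icc (0:ℝ) (1 - ε) ∪ Icc 2 (3 - ε)) ∪ Yj) =
        Icc 0 ((m : ℝ) * (3 - ε)) := by
  obtain ⟨y, hy⟩ := hYne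
  obtain ⟨hy1, hy2⟩ := hYsub hy
  set B : Set ℝ := (Icc (0:ℝ) (1 - ε) ∪ Icc 2 (3 - ε)) ∪ Yj with hB
  have hBsub : B ⊆ Icc 0 (3 - ε) := by
    rintro z (( ⟨hz1, hz2⟩ | ⟨hz1, hz2⟩) | hz)
    · exact ⟨hz1, by linarith⟩
    · exact ⟨by linarith, hz2⟩
    · obtain ⟨hz1, hz2⟩ := hYsub hz
      exact ⟨by linarith, by linarith⟩
  have h0B : (0 : ℝ) ∈ B := Or.inl (Or.inl ⟨le_refl 0, by linarith⟩)
  have h3B : (3 - ε : ℝ) ∈ B := Or.inl (Or.inr ⟨by linarith, le_refl _⟩)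
  have hyB : y ∈ B := Or.inr hy
  intro m hm
  induction m, hm using Nat.le_induction with
  | base =>
    rw [(show sumset 2 B = sumset 1 B + B from sumset_succ 1 B), sumset_one]
    apply subset_antisymm
    · intro x hx
      rw [Set.mem_add] at hx
      obtain ⟨z1, hz1, z2, hz2, rfl⟩ := hx
      obtain ⟨ha1, ha2⟩ := hBsub hz1
      obtain ⟨hb1, hb2⟩ := hBsub hz2
      constructor
      · linarith
      · push_cast; linarith
    · intro x hx
      obtain ⟨hx0, hx6⟩ := hx
      push_cast at hx6
      rw [Set.mem_add]
      rcases le_or_gt x (2 - 2 * ε) with h1 | h1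
      · exact ⟨x / 2, Or.inl (Or.inl ⟨by linarith, by linarith⟩),
          x / 2, Or.inl (Or.inl ⟨by linarith, by linarith⟩), by ring⟩
      rcases le_or_gt x 2 with h2 | h2
      · exact ⟨y, hyB, x - y, Or.inl (Or.inl ⟨by linarith, by linarith⟩), by ring⟩
      rcases le_or_gt x (3 - ε) with h3 | h3
      · exact ⟨x, Or.inl (Or.inr ⟨by linarith, h3⟩), 0, h0B, by ring⟩
      rcases le_or_gt x (4 - 2 * ε) with h4 | h4
      · exact ⟨3 - ε, h3B, x - (3 - ε), Or.inl (Or.inl ⟨by linarith, by linarith⟩), by ring⟩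
      rcases le_or_gt x 4 with h5 | h5
      · exact ⟨y, hyB, x - y, Or.inl (Or.inr ⟨by linarith, by linarith⟩), by ring⟩
      · exact ⟨x / 2, Or.inl (Or.inr ⟨by linarith, by linarith⟩),
          x / 2, Or.inl (Or.inr ⟨by linarith, by linarith⟩), by ring⟩
  | succ m hm2 ih =>
    rw [sumset_succ, ih]
    apply subset_antisymm
    · intro x hx
      rw [Set.mem_add] at hx
      obtain ⟨z1, ⟨hz1a, hz1b⟩, z2, hz2, rfl⟩ := hx
      obtain ⟨hb1, hb2⟩ := hBsub hz2
      constructor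
      · linarith
      · push_cast; linarith
    · intro x hx
      obtain ⟨hx0, hxup⟩ := hx
      push_cast at hxup
      have hm2' : (2 : ℝ) ≤ (m : ℝ) := by exact_mod_cast hm2
      have hεpos : (0 : ℝ) < 3 - ε := by linarith
      rw [Set.mem_add]
      rcases le_or_gt x ((m : ℝ) * (3 - ε)) with h1 | h1
      · exact ⟨x, ⟨hx0, h1⟩, 0, h0B, by ring⟩
      · refine ⟨x - (3 - ε), ⟨?_, by linarith⟩, 3 - ε, h3B, by ring⟩
        nlinarith

/-- The set-level gap-shift lemma: adding `[0, η]` to an interval with open gaps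
removed shifts and shrinks the gaps. -/
lemma gaps_add_Icc {a b η : ℝ} (hab : a ≤ b) (hη : 0 ≤ η)
    {ι : Type*} (s : Finset ι) (u v : ι → ℝ)
    (hau : ∀ p ∈ s, a ≤ u p) (hvb : ∀ p ∈ s, v p ≤ b)
    (huv : ∀ p ∈ s, u p < v p)
    (hsep : ∀ p ∈ s, ∀ q ∈ s, p ≠ q → v p ≤ u q ∨ v q ≤ u p) :
    (Icc a b \ ⋃ p ∈ s, Ioo (u p) (v p)) + Icc 0 η
      = Icc a (b + η) \ ⋃ p ∈ s, Ioo (u p + η) (v p) := by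
  have hu_not : ∀ q ∈ s, (u q) ∉ ⋃ p ∈ s, Ioo (u p) (v p) := by
    intro q hq hmem
    simp only [Set.mem_iUnion] at hmem
    obtain ⟨p, hp, h1, h2⟩ := hmem
    rcases eq_or_ne p q with rfl | hne
    · exact lt_irrefl _ h1
    · rcases hsep p hp q hq hne with h | h
      · linarith
      · linarith [huv q hq]
  have hv_not : ∀ q ∈ s, (v q) ∉ ⋃ p ∈ s, Ioo (u p) (v p) := by
    intro q hq hmem
    simp only [Set.mem_iUnion] at hmem
    obtain ⟨p, hp, h1, h2⟩ := hmem
    rcases eq_or_ne p q with rfl | hne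
    · exact lt_irrefl _ h2
    · rcases hsep p hp q hq hne with h | h
      · linarith [huv q hq]
      · linarith
  ext x
  constructor
  · intro hx
    rw [Set.mem_add] at hx
    obtain ⟨z, hz, t, ⟨ht0, htη⟩, rfl⟩ := hx
    obtain ⟨⟨hza, hzb⟩, hznot⟩ := hz
    refine ⟨⟨by linarith, by linarith⟩, ?_⟩
    intro hmem
    simp only [Set.mem_iUnion] at hmem
    obtain ⟨p, hp, h1, h2⟩ := hmem
    exact hznot (Set.mem_biUnion hp ⟨by linarith, by linarith⟩)
  · rintro ⟨⟨hax, hxb⟩, hxgap⟩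
    rw [Set.mem_add]
    by_cases hy0 : (min x b) ∈ ⋃ p ∈ s, Ioo (u p) (v p)
    · simp only [Set.mem_iUnion] at hy0
      obtain ⟨p, hp, h1, h2⟩ := hy0
      have hxp : x ∉ Ioo (u p + η) (v p) := by
        intro hmem
        exact hxgap (Set.mem_biUnion hp hmem)
      rw [Set.mem_Ioo, not_and_or, not_lt, not_lt] at hxp
      have hminx : min x b ≤ x := min_le_left _ _
      have hminb : min x b ≤ b := min_le_right _ _
      have hminge : x - η ≤ min x b := le_min (by linarith) (by linarith)
      rcases hxp with h | h
      · refine ⟨u p, ⟨⟨hau p hp, le_trans (huv p hp).le (hvb p hp)⟩, hu_not p hp⟩,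
          x - u p, ⟨by linarith, by linarith⟩, by ring⟩
      · refine ⟨v p, ⟨⟨le_trans (hau p hp) (huv p hp).le, hvb p hp⟩, hv_not p hp⟩,
          x - v p, ⟨by linarith, by linarith⟩, by ring⟩
    · refine ⟨min x b, ⟨⟨le_min hax hab, min_le_right _ _⟩, hy0⟩,
        x - min x b, ⟨?_, ?_⟩, by ring⟩
      · simp [min_le_left]
      · have : x - η ≤ min x b := le_min (by linarith) (by linarith)
        linarith

/-- Volume of an interval with finitely many disjoint open gaps removed. -/
lemma volume_gaps {a b : ℝ} (hab : a ≤ b)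
    {ι : Type*} (s : Finset ι) (u v : ι → ℝ)
    (hau : ∀ p ∈ s, a ≤ u p) (hvb : ∀ p ∈ s, v p ≤ b)
    (hsep : ∀ p ∈ s, ∀ q ∈ s, p ≠ q → v p ≤ u q ∨ v q ≤ u p) :
    (volume (Icc a b \ ⋃ p ∈ s, Ioo (u p) (v p))).toReal
      = (b - a) - ∑ p ∈ s, max (v p - u p) 0 := by
  have hsub : (⋃ p ∈ s, Ioo (u p) (v p)) ⊆ Icc a b := by
    intro x hx
    simp only [Set.mem_iUnion] at hx
    obtain ⟨p, hp, h1, h2⟩ := hx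
    exact ⟨le_trans (hau p hp) h1.le, le_trans h2.le (hvb p hp)⟩
  have hmeas : MeasurableSet (⋃ p ∈ s, Ioo (u p) (v p)) :=
    s.measurableSet_biUnion (fun p _ => measurableSet_Ioo)
  have hd : (↑s : Set ι).PairwiseDisjoint (fun p => Ioo (u p) (v p)) := by
    intro p hp q hq hne
    rcases hsep p hp q hq hne with h | h
    · refine Set.disjoint_left.2 (fun x hx1 hx2 => ?_)
      have := hx1.2
      have := hx2.1
      simp only [Set.mem_Ioo] at hx1 hx2
      linarith [hx1.2, hx2.1]
    · refine Set.disjoint_left.2 (fun x hx1 hx2 => ?_)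
      simp only [Set.mem_Ioo] at hx1 hx2
      linarith [hx1.1, hx2.2]
  have hIccTop : volume (Icc a b) ≠ ⊤ := by
    rw [Real.volume_Icc]; exact ENNReal.ofReal_ne_top
  have hfin : volume (⋃ p ∈ s, Ioo (u p) (v p)) ≠ ⊤ :=
    (lt_of_le_of_lt (measure_mono hsub) (lt_top_iff_ne_top.2 hIccTop)).ne
  rw [measure_diff hsub hmeas.nullMeasurableSet hfin]
  rw [ENNReal.toReal_sub_of_le (measure_mono hsub) hIccTop]
  rw [measure_biUnion_finset hd (fun p _ => measurableSet_Ioo)]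
  rw [ENNReal.toReal_sum (fun p _ => by rw [Real.volume_Ioo]; exact ENNReal.ofReal_ne_top)]
  rw [Real.volume_Icc, ENNReal.toReal_ofReal (by linarith)]
  congr 1
  refine Finset.sum_congr rfl (fun p _ => ?_)
  rw [Real.volume_Ioo, ENNReal.toReal_ofReal']

end Aux

set_option maxHeartbeats 4000000 in
/-- Let `H ≥ 2` and `n ≥ 2` be integers and, for `i = 1,…,n` and `j = 1,…,H`, let
`ℓ i j` be nonnegative integers with `L i = Σ_{j=1}^{H} ℓ i j > 0` for every `i`.
Let `ε, δ, c` be reals with `0 < ε < 1/3`,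
`0 < δ < min_i { ε/(H−1), (1−3ε)/(2H·L i) }`, and `(H−1)δ + 3 < c`.
Let `X = [0, 1−ε] ∪ [2, 3−ε]`.  Then `[1+ε, 2−2ε]` contains nonempty measurable sets
`Y 1, …, Y n` such that the sets `A i = [0, δ] ∪ (c + (X ∪ Y i))` satisfy
`μ(h(A i)) − μ(h(A (i+1))) = δ·Σ_{r=h}^{H} (r−h+1)·(ℓ (i+1) r − ℓ i r)`
for all `i = 1,…,n−1` and all `h = 1,…,H`. -/
theorem measure_difference_construction (H n : ℕ) (hH : 2 ≤ H) (hn : 2 ≤ n)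
    (ℓ : ℕ → ℕ → ℕ) (L : ℕ → ℕ) (hL : ∀ i, L i = ∑ j ∈ Finset.Icc 1 H, ℓ i j)
    (hLpos : ∀ i, 1 ≤ i → i ≤ n → 0 < L i)
    (ε δ c : ℝ) (hε0 : 0 < ε) (hε : ε < 1 / 3) (hδ0 : 0 < δ)
    (hδ1 : δ < ε / ((H : ℝ) - 1))
    (hδ2 : ∀ i, 1 ≤ i → i ≤ n → δ < (1 - 3 * ε) / (2 * (H : ℝ) * (L i : ℝ)))
    (hc : ((H : ℝ) - 1) * δ + 3 < c)
    (X : Set ℝ) (hX : X = Set.Icc 0 (1 - ε) ∪ Set.Icc 2 (3 - ε)) :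
    ∃ Y : ℕ → Set ℝ,
      (∀ i, 1 ≤ i → i ≤ n →
        (Y i).Nonempty ∧ MeasurableSet (Y i) ∧ Y i ⊆ Set.Icc (1 + ε) (2 - 2 * ε)) ∧
      (∀ A : ℕ → Set ℝ,
        (∀ i, 1 ≤ i → i ≤ n → A i = Set.Icc 0 δ ∪ ((c + ·) '' (X ∪ Y i))) →
        ∀ i, 1 ≤ i → i ≤ n - 1 → ∀ h, 1 ≤ h → h ≤ H →
          (volume (sumset h (A i))).toReal - (volume (sumset h (A (i + 1)))).toReal
            = δ * ∑ r ∈ Finset.Icc h H,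
                ((r : ℝ) - (h : ℝ) + 1) * ((ℓ (i + 1) r : ℝ) - (ℓ i r : ℝ))) := by
  classical
  have hH2 : (2:ℝ) ≤ (H:ℝ) := by exact_mod_cast hH
  have hH1 : (1:ℝ) ≤ (H:ℝ) - 1 := by linarith
  have hδ1' : δ * ((H:ℝ) - 1) < ε := (lt_div_iff₀ (by linarith)).mp hδ1
  have h13 : (0:ℝ) < 1 - 3 * ε := by linarith
  have hab : (1:ℝ) + ε ≤ 2 - 2 * ε := by linarith
  have hc3 : (3:ℝ) < c := by nlinarith
  set a : ℝ := 1 + ε with ha_def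
  set b : ℝ := 2 - 2 * ε with hb_def
  set w : ℕ → ℝ := fun j => (1 - 3 * ε) / (L j : ℝ) with hw_def
  set N : ℕ → ℕ → ℕ := fun j r => ∑ r' ∈ Finset.Ico 1 r, ℓ j r' with hN_def
  set idx : ℕ → Finset ((_ : ℕ) × ℕ) :=
    fun j => (Finset.Icc 1 H).sigma (fun r => Finset.range (ℓ j r)) with hidx_def
  set u : ℕ → ((_ : ℕ) × ℕ) → ℝ :=
    fun j p => a + ((N j p.1 + p.2 : ℕ) : ℝ) * w j + w j / 4 with hu_def
  set v : ℕ → ((_ : ℕ) × ℕ) → ℝ := fun j p => u j p + (p.1 : ℝ) * δ with hv_def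
  set Y : ℕ → Set ℝ :=
    fun j => Set.Icc a b \ ⋃ p ∈ idx j, Set.Ioo (u j p) (v j p) with hY_def
  -- basic positivity facts
  have hLpos' : ∀ j, 1 ≤ j → j ≤ n → (0:ℝ) < (L j : ℝ) := by
    intro j hj1 hj2; exact_mod_cast hLpos j hj1 hj2
  have hwpos : ∀ j, 1 ≤ j → j ≤ n → 0 < w j := by
    intro j hj1 hj2; exact div_pos h13 (hLpos' j hj1 hj2)
  have hLw : ∀ j, 1 ≤ j → j ≤ n → (L j : ℝ) * w j = 1 - 3 * ε := by
    intro j hj1 hj2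
    rw [hw_def]
    exact mul_div_cancel₀ _ (ne_of_gt (hLpos' j hj1 hj2))
  have hHw : ∀ j, 1 ≤ j → j ≤ n → (H:ℝ) * δ < w j / 2 := by
    intro j hj1 hj2
    have h2HL : (0:ℝ) < 2 * (H:ℝ) * (L j : ℝ) := by
      have := hLpos' j hj1 hj2; nlinarith
    have hk := (lt_div_iff₀ h2HL).mp (hδ2 j hj1 hj2)
    have hw2 : w j / 2 = (1 - 3 * ε) / (2 * (L j : ℝ)) := by
      rw [hw_def]; rw [div_div]; ring_nf
    rw [hw2, lt_div_iff₀ (by linarith [hLpos' j hj1 hj2] : (0:ℝ) < 2 * (L j : ℝ))]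
    nlinarith [hLpos' j hj1 hj2]
  -- slot bound
  have hslot : ∀ j, 1 ≤ j → j ≤ n → ∀ p ∈ idx j, N j p.1 + p.2 + 1 ≤ L j := by
    intro j hj1 hj2 p hp
    rw [hidx_def, Finset.mem_sigma] at hp
    obtain ⟨hp1, hp2⟩ := hp
    rw [Finset.mem_Icc] at hp1
    rw [Finset.mem_range] at hp2
    have hsum : N j p.1 + ℓ j p.1 = ∑ r' ∈ Finset.Ico 1 (p.1 + 1), ℓ j r' :=
      (Finset.sum_Ico_succ_top (by omega : 1 ≤ p.1) _).symm
    have hle : ∑ r' ∈ Finset.Ico 1 (p.1 + 1), ℓ j r' ≤ L j := by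
      rw [hL j]
      apply Finset.sum_le_sum_of_subset
      intro r hr
      rw [Finset.mem_Ico] at hr
      rw [Finset.mem_Icc]
      omega
    omega
  -- distinct gaps have distinct slots
  have hslot_lt : ∀ j, 1 ≤ j → j ≤ n → ∀ p ∈ idx j, ∀ q ∈ idx j, p.1 < q.1 →
      N j p.1 + p.2 + 1 ≤ N j q.1 + q.2 := by
    intro j hj1 hj2 p hp q hq hlt
    rw [hidx_def, Finset.mem_sigma] at hp hq
    obtain ⟨hp1, hp2⟩ := hp
    rw [Finset.mem_range] at hp2
    rw [Finset.mem_Icc] at hp1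
    have hsum : N j p.1 + ℓ j p.1 = ∑ r' ∈ Finset.Ico 1 (p.1 + 1), ℓ j r' :=
      (Finset.sum_Ico_succ_top (by omega : 1 ≤ p.1) _).symm
    have hNq : N j q.1 = ∑ r' ∈ Finset.Ico 1 q.1, ℓ j r' := rfl
    have hle : ∑ r' ∈ Finset.Ico 1 (p.1 + 1), ℓ j r' ≤ ∑ r' ∈ Finset.Ico 1 q.1, ℓ j r' := by
      apply Finset.sum_le_sum_of_subset
      intro r hr
      rw [Finset.mem_Ico] at hr ⊢
      omega
    omega
  have hslot_ne : ∀ j, 1 ≤ j → j ≤ n → ∀ p ∈ idx j, ∀ q ∈ idx j, p ≠ q →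
      N j p.1 + p.2 ≠ N j q.1 + q.2 := by
    intro j hj1 hj2 p hp q hq hne
    rcases lt_trichotomy p.1 q.1 with hlt | heq | hgt
    · have := hslot_lt j hj1 hj2 p hp q hq hlt; omega
    · have hp2 : p.2 ≠ q.2 := by
        intro h2
        apply hne
        obtain ⟨p1, p2⟩ := p
        obtain ⟨q1, q2⟩ := q
        simp only at heq h2
        subst heq; subst h2; rfl
      rw [heq]
      omega
    · have := hslot_lt j hj1 hj2 q hq p hp hgt; omega
  -- the four hypotheses for the gap lemmas
  have hau : ∀ j, 1 ≤ j → j ≤ n → ∀ p ∈ idx j, a ≤ u j p := by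
    intro j hj1 hj2 p hp
    simp only [hu_def]
    have h1 : (0:ℝ) ≤ ((N j p.1 + p.2 : ℕ) : ℝ) := Nat.cast_nonneg _
    have h2 := hwpos j hj1 hj2
    nlinarith
  have huv : ∀ j, 1 ≤ j → j ≤ n → ∀ p ∈ idx j, u j p < v j p := by
    intro j hj1 hj2 p hp
    simp only [hv_def]
    have hp1 : 1 ≤ p.1 := by
      rw [hidx_def, Finset.mem_sigma] at hp
      have := hp.1
      rw [Finset.mem_Icc] at this
      omega
    have : (1:ℝ) ≤ (p.1 : ℝ) := by exact_mod_cast hp1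
    nlinarith
  have hvband : ∀ j, 1 ≤ j → j ≤ n → ∀ p ∈ idx j,
      v j p < a + ((N j p.1 + p.2 + 1 : ℕ) : ℝ) * w j := by
    intro j hj1 hj2 p hp
    have hw2 := hHw j hj1 hj2
    have hpH : (p.1 : ℝ) ≤ (H : ℝ) := by
      rw [hidx_def, Finset.mem_sigma] at hp
      have := hp.1
      rw [Finset.mem_Icc] at this
      exact_mod_cast this.2
    have hpδ : (p.1 : ℝ) * δ ≤ (H:ℝ) * δ := by nlinarith
    simp only [hv_def, hu_def]
    push_cast
    have := hwpos j hj1 hj2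
    nlinarith
  have hvb : ∀ j, 1 ≤ j → j ≤ n → ∀ p ∈ idx j, v j p ≤ b := by
    intro j hj1 hj2 p hp
    have h1 := hvband j hj1 hj2 p hp
    have h2 : ((N j p.1 + p.2 + 1 : ℕ) : ℝ) ≤ (L j : ℝ) := by
      exact_mod_cast hslot j hj1 hj2 p hp
    have h3 : ((N j p.1 + p.2 + 1 : ℕ) : ℝ) * w j ≤ (L j : ℝ) * w j :=
      mul_le_mul_of_nonneg_right h2 (hwpos j hj1 hj2).le
    rw [hLw j hj1 hj2] at h3
    rw [hb_def]; rw [ha_def] at h1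
    linarith
  have hsep : ∀ j, 1 ≤ j → j ≤ n → ∀ p ∈ idx j, ∀ q ∈ idx j, p ≠ q →
      v j p ≤ u j q ∨ v j q ≤ u j p := by
    intro j hj1 hj2 p hp q hq hne
    have hwp := hwpos j hj1 hj2
    have key : ∀ p' ∈ idx j, ∀ q' ∈ idx j,
        N j p'.1 + p'.2 + 1 ≤ N j q'.1 + q'.2 → v j p' ≤ u j q' := by
      intro p' hp' q' hq' hlt
      have h1 := hvband j hj1 hj2 p' hp'
      have h2 : ((N j p'.1 + p'.2 + 1 : ℕ) : ℝ) ≤ ((N j q'.1 + q'.2 : ℕ) : ℝ) := by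
        exact_mod_cast hlt
      have h3 : ((N j p'.1 + p'.2 + 1 : ℕ) : ℝ) * w j ≤ ((N j q'.1 + q'.2 : ℕ) : ℝ) * w j :=
        mul_le_mul_of_nonneg_right h2 hwp.le
      have h4 : a + ((N j q'.1 + q'.2 : ℕ) : ℝ) * w j ≤ u j q' := by
        simp only [hu_def]; nlinarith
      linarith
    have hne' := hslot_ne j hj1 hj2 p hp q hq hne
    rcases lt_or_gt_of_ne hne' with hlt | hgt
    · exact Or.inl (key p hp q hq (by omega))
    · exact Or.inr (key q hq p hp (by omega))
  have hbne : ∀ j, 1 ≤ j → j ≤ n → b ∈ Y j := by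
    intro j hj1 hj2
    simp only [hY_def]
    refine ⟨⟨hab, le_refl b⟩, ?_⟩
    intro hmem
    simp only [Set.mem_iUnion] at hmem
    obtain ⟨p, hp, h1, h2⟩ := hmem
    exact absurd (lt_of_lt_of_le h2 (hvb j hj1 hj2 p hp)) (lt_irrefl b)
  have hYmeas : ∀ j, MeasurableSet (Y j) := by
    intro j
    exact measurableSet_Icc.diff
      ((idx j).measurableSet_biUnion (fun p _ => measurableSet_Ioo))
  have hYsub : ∀ j, Y j ⊆ Set.Icc a b := fun j => Set.diff_subset
  refine ⟨Y, fun j hj1 hj2 => ⟨⟨b, hbne j hj1 hj2⟩, hYmeas j, hYsub j⟩, ?_⟩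
  intro A hA i hi1 hi2 h hh1 hh2
  have hi1' : 1 ≤ i + 1 := by omega
  have hi2' : i + 1 ≤ n := by omega
  have hin : i ≤ n := by omega
  set η : ℝ := ((h - 1 : ℕ) : ℝ) * δ with hη_def
  have hηcast : ((h - 1 : ℕ) : ℝ) = (h : ℝ) - 1 := by
    rw [Nat.cast_sub hh1, Nat.cast_one]
  have hη0 : 0 ≤ η := by rw [hη_def]; positivity
  have hhH : (h:ℝ) ≤ (H:ℝ) := by exact_mod_cast hh2
  have hηε : η < ε := by
    have h1 : ((h - 1 : ℕ) : ℝ) ≤ (H : ℝ) - 1 := by rw [hηcast]; linarith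
    have h2 : ((h - 1 : ℕ) : ℝ) * δ ≤ ((H:ℝ) - 1) * δ :=
      mul_le_mul_of_nonneg_right h1 hδ0.le
    rw [hη_def]
    linarith [hδ1']
  have hhδc : (h:ℝ) * δ < c := by
    have h1 : (h:ℝ) * δ ≤ (H:ℝ) * δ := mul_le_mul_of_nonneg_right hhH hδ0.le
    have h2 : (H:ℝ) * δ = ((H:ℝ) - 1) * δ + δ := by ring
    have h3 : δ ≤ ((H:ℝ) - 1) * δ := by nlinarith
    linarith
  -- the `j`-independent blocks
  set g : ℕ → Set ℝ := fun m =>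
    if m = 0 then Set.Icc 0 ((h:ℝ) * δ)
    else Set.Icc ((m:ℝ) * c) ((m:ℝ) * c + ((h - m : ℕ) : ℝ) * δ + (m:ℝ) * (3 - ε))
    with hg_def
  set W : Set ℝ := ⋃ m ∈ (Finset.range (h + 1)).erase 1, g m with hW_def
  -- decomposition of the sumset
  have hdecomp : ∀ j, 1 ≤ j → j ≤ n →
      sumset h (A j) = ((fun x => c + x) '' ((X ∪ Y j) + Set.Icc 0 η)) ∪ W := by
    intro j hj1 hj2
    rw [hA j hj1 hj2, sumset_union]
    have h1mem : 1 ∈ Finset.range (h + 1) := Finset.mem_range.2 (by omega)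
    rw [← Finset.insert_erase h1mem, Finset.set_biUnion_insert]
    congr 1
    · -- the m = 1 block
      rw [sumset_one, sumset_Icc (h - 1) hδ0.le, mul_zero]
      have himg1 : ((c + ·) '' (X ∪ Y j)) = {c} + (X ∪ Y j) :=
        (Set.singleton_add).symm
      have himg2 : (fun x => c + x) '' ((X ∪ Y j) + Set.Icc 0 η)
          = {c} + ((X ∪ Y j) + Set.Icc 0 η) := (Set.singleton_add).symm
      rw [himg1, himg2, add_comm (Set.Icc 0 (((h-1:ℕ):ℝ) * δ)) _, add_assoc]
    · -- the other blocks
      rw [hW_def]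
      refine Set.iUnion_congr fun m => Set.iUnion_congr fun hm => ?_
      have hm1 : m ≠ 1 := (Finset.mem_erase.1 hm).1
      have hmle : m ≤ h := by
        have := (Finset.mem_erase.1 hm).2
        rw [Finset.mem_range] at this
        omega
      rcases Nat.eq_zero_or_pos m with rfl | hmpos
      · simp only [hg_def, if_pos rfl]
        rw [sumset_zero, Nat.sub_zero, sumset_Icc h hδ0.le, mul_zero]
        simp [Set.add_singleton]
      · have hm2 : 2 ≤ m := by omega
        simp only [hg_def, if_neg (by omega : m ≠ 0)]
        rw [sumset_image_add, hX,
          sumset_XY hε0 hε (Y j) (hYsub j) ⟨b, hbne j hj1 hj2⟩ m hm2,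
          Set.image_const_add_Icc, add_zero,
          sumset_Icc (h - m) hδ0.le, mul_zero]
        have hm0 : (0:ℝ) ≤ (m:ℝ) := Nat.cast_nonneg m
        rw [Icc_add_Icc' (by positivity) (by nlinarith : (m:ℝ)*c ≤ (m:ℝ)*c + (m:ℝ)*(3-ε))]
        congr 1 <;> ring
  -- the shape of `Y j + [0, η]`
  have hYIeq : ∀ j, 1 ≤ j → j ≤ n → Y j + Set.Icc 0 η
      = Set.Icc a (b + η) \ ⋃ p ∈ idx j, Set.Ioo (u j p + η) (v j p) := by
    intro j hj1 hj2
    simp only [hY_def]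
    exact gaps_add_Icc hab hη0 (idx j) (u j) (v j) (hau j hj1 hj2) (hvb j hj1 hj2)
      (huv j hj1 hj2) (hsep j hj1 hj2)
  -- the measure of `Y j + [0, η]`
  have hYvol : ∀ j, 1 ≤ j → j ≤ n → (volume (Y j + Set.Icc 0 η)).toReal
      = (b + η - a) - δ * ∑ r ∈ Finset.Icc h H,
          ((r : ℝ) - (h : ℝ) + 1) * (ℓ j r : ℝ) := by
    intro j hj1 hj2
    rw [hYIeq j hj1 hj2]
    have hab' : a ≤ b + η := by linarith
    have hau' : ∀ p ∈ idx j, a ≤ u j p + η :=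
      fun p hp => by linarith [hau j hj1 hj2 p hp]
    have hvb' : ∀ p ∈ idx j, v j p ≤ b + η :=
      fun p hp => by linarith [hvb j hj1 hj2 p hp]
    have hsep' : ∀ p ∈ idx j, ∀ q ∈ idx j, p ≠ q →
        v j p ≤ u j q + η ∨ v j q ≤ u j p + η := by
      intro p hp q hq hne
      rcases hsep j hj1 hj2 p hp q hq hne with hle | hle
      · exact Or.inl (by linarith)
      · exact Or.inr (by linarith)
    rw [volume_gaps hab' (idx j) (fun p => u j p + η) (v j) hau' hvb' hsep']
    congr 1
    have hterm : ∀ p : (_ : ℕ) × ℕ, v j p - (u j p + η) = (p.1 : ℝ) * δ - η := by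
      intro p; simp only [hv_def]; ring
    calc ∑ p ∈ idx j, max (v j p - (u j p + η)) 0
        = ∑ p ∈ idx j, max ((p.1:ℝ) * δ - η) 0 :=
          Finset.sum_congr rfl (fun p _ => by rw [hterm p])
      _ = ∑ r ∈ Finset.Icc 1 H, ∑ t ∈ Finset.range (ℓ j r), max ((r:ℝ) * δ - η) 0 := by
          simp only [hidx_def]
          rw [Finset.sum_sigma]
      _ = ∑ r ∈ Finset.Icc 1 H, (ℓ j r : ℝ) * max ((r:ℝ) * δ - η) 0 := by
          refine Finset.sum_congr rfl (fun r _ => ?_)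
          rw [Finset.sum_const, Finset.card_range, nsmul_eq_mul]
      _ = ∑ r ∈ Finset.Icc h H, (ℓ j r : ℝ) * max ((r:ℝ) * δ - η) 0 := by
          refine (Finset.sum_subset ?_ ?_).symm
          · intro r hr
            rw [Finset.mem_Icc] at hr ⊢
            omega
          · intro r hr hrn
            have hrh : r + 1 ≤ h := by
              rw [Finset.mem_Icc] at hr hrn
              omega
            have hr1 : (r:ℝ) + 1 ≤ (h:ℝ) := by exact_mod_cast hrh
            have hle : (r:ℝ) * δ - η ≤ 0 := by
              rw [hη_def, hηcast]
              nlinarith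
            rw [max_eq_right hle, mul_zero]
      _ = δ * ∑ r ∈ Finset.Icc h H, ((r:ℝ) - (h:ℝ) + 1) * (ℓ j r : ℝ) := by
          rw [Finset.mul_sum]
          refine Finset.sum_congr rfl (fun r hr => ?_)
          have hrh : h ≤ r := (Finset.mem_Icc.1 hr).1
          have hr' : (h:ℝ) ≤ (r:ℝ) := by exact_mod_cast hrh
          have hpos : 0 ≤ (r:ℝ) * δ - η := by
            rw [hη_def, hηcast]
            nlinarith
          rw [max_eq_left hpos, hη_def, hηcast]
          ring
  -- splitting `(X ∪ Y j) + [0, η]`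
  set XI : Set ℝ := Set.Icc 0 (1 - ε + η) ∪ Set.Icc 2 (3 - ε + η) with hXI_def
  have hXIadd : ∀ j, (X ∪ Y j) + Set.Icc 0 η = XI ∪ (Y j + Set.Icc 0 η) := by
    intro j
    rw [hX, Set.union_add, Set.union_add,
      Icc_add_Icc' (by linarith : (0:ℝ) ≤ 1 - ε) hη0,
      Icc_add_Icc' (by linarith : (2:ℝ) ≤ 3 - ε) hη0, hXI_def]
    norm_num
  have hYImeas : ∀ j, 1 ≤ j → j ≤ n → MeasurableSet (Y j + Set.Icc 0 η) := by
    intro j hj1 hj2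
    rw [hYIeq j hj1 hj2]
    exact measurableSet_Icc.diff
      ((idx j).measurableSet_biUnion fun p _ => measurableSet_Ioo)
  have hYIsub : ∀ j, 1 ≤ j → j ≤ n → Y j + Set.Icc 0 η ⊆ Set.Icc a (b + η) := by
    intro j hj1 hj2
    rw [hYIeq j hj1 hj2]
    exact Set.diff_subset
  have hXImeas : MeasurableSet XI := measurableSet_Icc.union measurableSet_Icc
  have hdisjXY : ∀ j, 1 ≤ j → j ≤ n → Disjoint XI (Y j + Set.Icc 0 η) := by
    intro j hj1 hj2
    rw [Set.disjoint_left]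
    intro x hx hx2
    obtain ⟨h1, h2⟩ := hYIsub j hj1 hj2 hx2
    rw [ha_def] at h1
    rw [hb_def] at h2
    rcases hx with ⟨h3, h4⟩ | ⟨h3, h4⟩
    · linarith
    · linarith
  -- properties of W
  have hWmeas : MeasurableSet W := by
    rw [hW_def]
    refine Finset.measurableSet_biUnion _ (fun m _ => ?_)
    simp only [hg_def]
    split_ifs <;> exact measurableSet_Icc
  have hWsub : W ⊆ Set.Icc 0 ((h:ℝ) * δ) ∪ Set.Ici (2 * c) := by
    rw [hW_def]
    refine Set.iUnion₂_subset fun m hm => ?_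
    have hm1 : m ≠ 1 := (Finset.mem_erase.1 hm).1
    rcases Nat.eq_zero_or_pos m with rfl | hmpos
    · simp only [hg_def, if_pos rfl]
      exact fun x hx => Or.inl hx
    · have hm2 : (2:ℝ) ≤ (m:ℝ) := by exact_mod_cast (by omega : 2 ≤ m)
      simp only [hg_def, if_neg (by omega : m ≠ 0)]
      intro x hx
      refine Or.inr ?_
      rw [Set.mem_Ici]
      have h1 := hx.1
      nlinarith
  have hWbdd : W ⊆ Set.Icc 0 ((h:ℝ) * c + (h:ℝ) * δ + (h:ℝ) * 3) := by
    rw [hW_def]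
    refine Set.iUnion₂_subset fun m hm => ?_
    have hmle : m ≤ h := by
      have := (Finset.mem_erase.1 hm).2
      rw [Finset.mem_range] at this
      omega
    have hmle' : (m:ℝ) ≤ (h:ℝ) := by exact_mod_cast hmle
    have hm0 : (0:ℝ) ≤ (m:ℝ) := Nat.cast_nonneg m
    have hh0 : (0:ℝ) ≤ (h:ℝ) := Nat.cast_nonneg h
    have hhm0 : (0:ℝ) ≤ ((h - m : ℕ):ℝ) := Nat.cast_nonneg _
    have hhm : ((h - m : ℕ):ℝ) ≤ (h:ℝ) := by exact_mod_cast Nat.sub_le h m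
    simp only [hg_def]
    split_ifs with h0
    · exact Set.Icc_subset_Icc (le_refl 0) (by nlinarith)
    · exact Set.Icc_subset_Icc (by nlinarith) (by nlinarith)
  have hWfin : volume W ≠ ⊤ := by
    refine ne_top_of_le_ne_top ?_ (measure_mono hWbdd)
    rw [Real.volume_Icc]
    exact ENNReal.ofReal_ne_top
  -- translation invariance
  have himg_eq : ∀ S : Set ℝ, (fun x => c + x) '' S = (fun x => -c + x) ⁻¹' S := by
    intro S
    ext x
    simp only [Set.mem_image, Set.mem_preimage]
    constructor
    · rintro ⟨y, hy, rfl⟩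
      have : -c + (c + y) = y := by ring
      rwa [this]
    · intro hx
      exact ⟨-c + x, hx, by ring⟩
  have himg_vol : ∀ S : Set ℝ, volume ((fun x => c + x) '' S) = volume S := by
    intro S
    rw [himg_eq]
    exact measure_preimage_add volume (-c) S
  have himg_meas : ∀ S : Set ℝ, MeasurableSet S →
      MeasurableSet ((fun x => c + x) '' S) := by
    intro S hS
    rw [himg_eq]
    exact hS.preimage (measurable_const_add (-c))
  -- the key measure identity
  have hkey : ∀ j, 1 ≤ j → j ≤ n → (volume (sumset h (A j))).toReal
      = (volume W).toReal + (volume XI).toReal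
        + (volume (Y j + Set.Icc 0 η)).toReal := by
    intro j hj1 hj2
    rw [hdecomp j hj1 hj2, hXIadd j]
    have hTmeas : MeasurableSet ((fun x => c + x) '' (XI ∪ (Y j + Set.Icc 0 η))) :=
      himg_meas _ (hXImeas.union (hYImeas j hj1 hj2))
    have hTsub : (fun x => c + x) '' (XI ∪ (Y j + Set.Icc 0 η))
        ⊆ Set.Icc c (c + (3 - ε + η)) := by
      rintro x ⟨z, hz, rfl⟩
      have hz' : z ∈ Set.Icc (0:ℝ) (3 - ε + η) := by
        rcases hz with (⟨h1, h2⟩ | ⟨h1, h2⟩) | hz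
        · exact ⟨h1, by linarith⟩
        · exact ⟨by linarith, h2⟩
        · obtain ⟨h1, h2⟩ := hYIsub j hj1 hj2 hz
          rw [ha_def] at h1
          rw [hb_def] at h2
          exact ⟨by linarith, by linarith⟩
      have hred : (fun x : ℝ => c + x) z = c + z := rfl
      rw [hred]
      exact ⟨by linarith [hz'.1], by linarith [hz'.2]⟩
    have hdisjTW : Disjoint ((fun x => c + x) '' (XI ∪ (Y j + Set.Icc 0 η))) W := by
      rw [Set.disjoint_left]
      intro x hx hxW
      obtain ⟨h1, h2⟩ := hTsub hx
      rcases hWsub hxW with ⟨h3, h4⟩ | h3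
      · linarith
      · rw [Set.mem_Ici] at h3
        linarith
    have hXIfin : volume XI ≠ ⊤ := by
      refine ne_top_of_le_ne_top ?_
        (measure_mono (?_ : XI ⊆ Set.Icc (0:ℝ) (3 - ε + η)))
      · rw [Real.volume_Icc]
        exact ENNReal.ofReal_ne_top
      · rintro x (⟨h1, h2⟩ | ⟨h1, h2⟩)
        · exact ⟨h1, by linarith⟩
        · exact ⟨by linarith, h2⟩
    have hYIfin : volume (Y j + Set.Icc 0 η) ≠ ⊤ := by
      refine ne_top_of_le_ne_top ?_ (measure_mono (hYIsub j hj1 hj2))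
      rw [Real.volume_Icc]
      exact ENNReal.ofReal_ne_top
    rw [measure_union hdisjTW hWmeas, himg_vol,
      measure_union (hdisjXY j hj1 hj2) (hYImeas j hj1 hj2),
      ENNReal.toReal_add (ENNReal.add_ne_top.2 ⟨hXIfin, hYIfin⟩) hWfin,
      ENNReal.toReal_add hXIfin hYIfin]
    ring
  -- conclusion
  rw [hkey i hi1 hin, hkey (i + 1) hi1' hi2', hYvol i hi1 hin, hYvol (i + 1) hi1' hi2']
  have hsimp : ∀ x y z s t : ℝ, x + y + (z - s) - (x + y + (z - t)) = t - s := by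
    intros; ring
  rw [hsimp]
  rw [← mul_sub, ← Finset.sum_sub_distrib]
  congr 1
  exact Finset.sum_congr rfl fun r hr => by ring
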